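/- Assume condition (Z): ∑_{i=1}^m (n²κ_iT_p² − d_i²(1−κ_i)T_i²)/(nT_pT_i) − 2n < 0. Then S restricted to M^{−1} attains its global maximum: there exists (β*,α*) ∈ M^{−1} with S(β,α) ≤ S(β*,α*) for all (β,α) ∈ M^{−1}. -/

import Mathlib

set_option maxHeartbeats 1000000 in
/-- Theorem 5.4: under condition (Z), the scalar curvature functional restricted to
`M⁻¹ = {tr_g T = -1}` attains its global maximum. -/
theorem stmt_9 (m : ℕ) (hm : 1 ≤ m) (d : Fin m → ℕ) (hd : ∀ i, 0 < d i)
    (κ : Fin m → ℝ) (hκ0 : ∀ i, 0 ≤ κ i) (hκ1 : ∀ i, κ i < 1)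
    (n : ℝ) (hn : n = 2 * ∑ i, (d i : ℝ) * (1 - κ i))
    (Tp : ℝ) (hTp : 0 < Tp) (T : Fin m → ℝ) (hT : ∀ i, 0 < T i)
    (S F : ℝ × (Fin m → ℝ) → ℝ)
    (hS : ∀ p, S p = -(1/4) * (∑ i, (d i : ℝ) * (1 - κ i) * p.2 i) / p.1^2
        - n / (2 * p.1) + (1/4) * ∑ i, (d i : ℝ) * κ i / p.2 i)
    (hF : ∀ p, F p = -n * Tp / p.1 + ∑ i, (d i : ℝ) * T i / p.2 i)
    (Mneg : Set (ℝ × (Fin m → ℝ)))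
    (hMneg : Mneg = {p | 0 < p.1 ∧ (∀ i, 0 < p.2 i) ∧ F p = -1})
    (hZ : ∑ i, (n^2 * κ i * Tp^2 - (d i : ℝ)^2 * (1 - κ i) * (T i)^2) / (n * Tp * T i)
        - 2 * n < 0) :
    ∃ p ∈ Mneg, ∀ q ∈ Mneg, S q ≤ S p := by
  haveI : Nonempty (Fin m) := ⟨⟨0, hm⟩⟩
  have hd' : ∀ i, (0:ℝ) < d i := fun i => by exact_mod_cast hd i
  have ha' : ∀ i, (0:ℝ) < (d i : ℝ) * (1 - κ i) :=
    fun i => mul_pos (hd' i) (by linarith [hκ1 i])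
  have hn0 : 0 < n := by
    have : 0 < ∑ i, (d i : ℝ) * (1 - κ i) :=
      Finset.sum_pos (fun i _ => ha' i) Finset.univ_nonempty
    rw [hn]; linarith
  have hnTp : 0 < n * Tp := mul_pos hn0 hTp
  set Z : ℝ := ∑ i, (n^2 * κ i * Tp^2 - (d i : ℝ)^2 * (1 - κ i) * (T i)^2) / (n * Tp * T i)
      - 2 * n with hZdef
  -- basic membership facts
  have memMneg : ∀ p, p ∈ Mneg → 0 < p.1 ∧ (∀ i, 0 < p.2 i) ∧ F p = -1 := by
    intro p hp; rwa [hMneg] at hp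
  have hconstraint : ∀ p ∈ Mneg, n * Tp / p.1 = 1 + ∑ i, (d i : ℝ) * T i / p.2 i := by
    intro p hp
    obtain ⟨hb, ha, hFp⟩ := memMneg p hp
    rw [hF] at hFp
    have e : -n * Tp / p.1 = -(n * Tp / p.1) := by ring
    rw [e] at hFp
    linarith
  have hkey : ∀ p ∈ Mneg, ∀ j, (d j : ℝ) * T j * p.1 ≤ n * Tp * p.2 j := by
    intro p hp j
    obtain ⟨hb, ha, _⟩ := memMneg p hp
    have hcon := hconstraint p hp
    have h1 : (d j : ℝ) * T j / p.2 j ≤ ∑ i, (d i : ℝ) * T i / p.2 i :=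
      Finset.single_le_sum
        (fun i _ => le_of_lt (div_pos (mul_pos (hd' i) (hT i)) (ha i)))
        (Finset.mem_univ j)
    have h2 : (d j : ℝ) * T j / p.2 j ≤ n * Tp / p.1 := by linarith
    rw [div_le_div_iff₀ (ha j) hb] at h2
    linarith
  have hble : ∀ p ∈ Mneg, p.1 ≤ n * Tp := by
    intro p hp
    obtain ⟨hb, ha, _⟩ := memMneg p hp
    have hcon := hconstraint p hp
    have hsumpos : 0 ≤ ∑ i, (d i : ℝ) * T i / p.2 i :=
      Finset.sum_nonneg (fun i _ => le_of_lt (div_pos (mul_pos (hd' i) (hT i)) (ha i)))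
    have h1 : 1 ≤ n * Tp / p.1 := by linarith
    rw [le_div_iff₀ hb] at h1
    linarith
  -- per-term estimate
  have hper : ∀ p ∈ Mneg, ∀ j,
      -(1/4) * ((d j : ℝ) * (1 - κ j) * p.2 j) / p.1^2 + (1/4) * ((d j : ℝ) * κ j / p.2 j)
        ≤ 1/(4 * p.1) * ((n^2 * κ j * Tp^2 - (d j : ℝ)^2 * (1 - κ j) * (T j)^2) / (n * Tp * T j)) := by
    intro p hp j
    obtain ⟨hb, ha, _⟩ := memMneg p hp
    have key := hkey p hp j
    rw [← sub_nonneg]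
    have expand : 1/(4 * p.1) * ((n^2 * κ j * Tp^2 - (d j : ℝ)^2 * (1 - κ j) * (T j)^2) / (n * Tp * T j))
        - (-(1/4) * ((d j : ℝ) * (1 - κ j) * p.2 j) / p.1^2 + (1/4) * ((d j : ℝ) * κ j / p.2 j))
        = (κ j * n * Tp * p.1 * (n * Tp * p.2 j - (d j : ℝ) * T j * p.1)
            + (d j : ℝ) * (1 - κ j) * T j * p.2 j * (n * Tp * p.2 j - (d j : ℝ) * T j * p.1))
          / (4 * p.1^2 * p.2 j * (n * Tp * T j)) := by
      field_simp [hb.ne', (ha j).ne', hn0.ne', hTp.ne', (hT j).ne']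
      ring
    rw [expand]
    apply div_nonneg
    · apply add_nonneg
      · exact mul_nonneg
          (mul_nonneg (mul_nonneg (mul_nonneg (hκ0 j) hn0.le) hTp.le) hb.le) (by linarith)
      · exact mul_nonneg (mul_nonneg (mul_nonneg (ha' j).le (hT j).le) (ha j).le) (by linarith)
    · exact le_of_lt (mul_pos (mul_pos (mul_pos (by norm_num : (0:ℝ) < 4)
        (pow_pos hb 2)) (ha j)) (mul_pos hnTp (hT j)))
  -- global bound: S p ≤ Z / (4 p.1)
  have lemA : ∀ p ∈ Mneg, S p ≤ Z / (4 * p.1) := by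
    intro p hp
    obtain ⟨hb, ha, _⟩ := memMneg p hp
    have h1 : S p = (∑ i, (-(1/4) * ((d i : ℝ) * (1 - κ i) * p.2 i) / p.1^2
        + (1/4) * ((d i : ℝ) * κ i / p.2 i))) - n / (2 * p.1) := by
      rw [hS]
      rw [Finset.sum_add_distrib, ← Finset.sum_div, ← Finset.mul_sum, ← Finset.mul_sum]
      ring
    have h2 : (∑ i, (-(1/4) * ((d i : ℝ) * (1 - κ i) * p.2 i) / p.1^2
        + (1/4) * ((d i : ℝ) * κ i / p.2 i)))
        ≤ ∑ i, 1/(4 * p.1) * ((n^2 * κ i * Tp^2 - (d i : ℝ)^2 * (1 - κ i) * (T i)^2) / (n * Tp * T i)) :=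
      Finset.sum_le_sum (fun i _ => hper p hp i)
    have h3 : (∑ i, 1/(4 * p.1) * ((n^2 * κ i * Tp^2 - (d i : ℝ)^2 * (1 - κ i) * (T i)^2) / (n * Tp * T i)))
        - n / (2 * p.1) = Z / (4 * p.1) := by
      rw [← Finset.mul_sum, hZdef]
      generalize (∑ i, (n^2 * κ i * Tp^2 - (d i : ℝ)^2 * (1 - κ i) * (T i)^2) / (n * Tp * T i)) = X
      field_simp
      ring
    linarith
  -- base point p₀
  have hD0 : 0 < ∑ i, (d i : ℝ) * T i :=
    Finset.sum_pos (fun i _ => mul_pos (hd' i) (hT i)) Finset.univ_nonempty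
  set p₀ : ℝ × (Fin m → ℝ) := (n * Tp / (1 + ∑ i, (d i : ℝ) * T i), fun _ => 1) with hp₀def
  have hp₀1 : p₀.1 = n * Tp / (1 + ∑ i, (d i : ℝ) * T i) := rfl
  have hp₀b : 0 < p₀.1 := by rw [hp₀1]; exact div_pos hnTp (by linarith)
  have hp₀ : p₀ ∈ Mneg := by
    rw [hMneg]
    refine ⟨hp₀b, fun i => one_pos, ?_⟩
    rw [hF]
    show -n * Tp / (n * Tp / (1 + ∑ i, (d i : ℝ) * T i)) + ∑ i, (d i : ℝ) * T i / (1:ℝ) = -1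
    have h1 : (1:ℝ) + ∑ i, (d i : ℝ) * T i ≠ 0 := by linarith
    have e : -n * Tp / (n * Tp / (1 + ∑ i, (d i : ℝ) * T i)) = -(1 + ∑ i, (d i : ℝ) * T i) := by
      rw [div_div_eq_mul_div]
      field_simp
    rw [e]
    simp only [div_one]
    ring
  set s₀ : ℝ := S p₀ with hs₀def
  have hs₀neg : s₀ < 0 :=
    lt_of_le_of_lt (lemA p₀ hp₀) (div_neg_of_neg_of_pos hZ (by linarith [hp₀b]))
  set βlo : ℝ := Z / (4 * s₀) with hβlodef
  have hβlo : 0 < βlo := div_pos_of_neg_of_neg hZ (by linarith)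
  have hβlo_le : ∀ p ∈ Mneg, s₀ ≤ S p → βlo ≤ p.1 := by
    intro p hp hsp
    obtain ⟨hb, _, _⟩ := memMneg p hp
    have h2 : s₀ ≤ Z / (4 * p.1) := le_trans hsp (lemA p hp)
    have h3 : s₀ * (4 * p.1) ≤ Z := (le_div_iff₀ (by linarith : (0:ℝ) < 4 * p.1)).mp h2
    rw [hβlodef, div_le_iff_of_neg (by linarith : 4 * s₀ < 0)]
    nlinarith
  -- bound for the positive part of S
  set Cc : ℝ := (1/4) * ∑ i, (d i : ℝ) * κ i * (n * Tp) / ((d i : ℝ) * T i) with hCcdef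
  have hCc : 0 ≤ Cc := by
    apply mul_nonneg (by norm_num)
    apply Finset.sum_nonneg
    intro i _
    apply div_nonneg _ (mul_pos (hd' i) (hT i)).le
    exact mul_nonneg (mul_nonneg (hd' i).le (hκ0 i)) hnTp.le
  have lemC : ∀ p ∈ Mneg, (1/4) * ∑ i, (d i : ℝ) * κ i / p.2 i ≤ Cc / p.1 := by
    intro p hp
    obtain ⟨hb, ha, _⟩ := memMneg p hp
    have hterm : ∀ i, (d i : ℝ) * κ i / p.2 i ≤ (d i : ℝ) * κ i * (n * Tp) / ((d i : ℝ) * T i) / p.1 := by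
      intro i
      have key := hkey p hp i
      rw [div_div, div_le_div_iff₀ (ha i) (mul_pos (mul_pos (hd' i) (hT i)) hb)]
      nlinarith [mul_le_mul_of_nonneg_left key (mul_nonneg (hd' i).le (hκ0 i))]
    calc (1/4) * ∑ i, (d i : ℝ) * κ i / p.2 i
        ≤ (1/4) * ∑ i, (d i : ℝ) * κ i * (n * Tp) / ((d i : ℝ) * T i) / p.1 := by
          exact mul_le_mul_of_nonneg_left
            (Finset.sum_le_sum (fun i _ => hterm i)) (by norm_num)
      _ = Cc / p.1 := by rw [hCcdef, mul_div_assoc, Finset.sum_div]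
  -- upper bounds for the α's on the superlevel set
  set αhi : Fin m → ℝ := fun j => (Cc / βlo - s₀) * (4 * n^2 * Tp^2) / ((d j : ℝ) * (1 - κ j))
    with hαhidef
  have lemHi : ∀ p ∈ Mneg, s₀ ≤ S p → ∀ j, p.2 j ≤ αhi j := by
    intro p hp hsp j
    obtain ⟨hb, ha, _⟩ := memMneg p hp
    have hble' := hble p hp
    have hβ := hβlo_le p hp hsp
    have hC := lemC p hp
    have hsumA : (d j : ℝ) * (1 - κ j) * p.2 j ≤ ∑ i, (d i : ℝ) * (1 - κ i) * p.2 i :=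
      Finset.single_le_sum (fun i _ => (mul_pos (ha' i) (ha i)).le) (Finset.mem_univ j)
    have h1 : S p ≤ -(1/4) * ((d j : ℝ) * (1 - κ j) * p.2 j) / (n * Tp)^2 + Cc / βlo := by
      rw [hS]
      have e1 : -(1/4) * (∑ i, (d i : ℝ) * (1 - κ i) * p.2 i) / p.1^2
          ≤ -(1/4) * ((d j : ℝ) * (1 - κ j) * p.2 j) / p.1^2 := by
        exact (div_le_div_iff_of_pos_right (pow_pos hb 2)).mpr (by linarith)
      have e2 : -(1/4) * ((d j : ℝ) * (1 - κ j) * p.2 j) / p.1^2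
          ≤ -(1/4) * ((d j : ℝ) * (1 - κ j) * p.2 j) / (n * Tp)^2 := by
        have hnum : -(1/4) * ((d j : ℝ) * (1 - κ j) * p.2 j) ≤ 0 := by
          have := mul_pos (ha' j) (ha j)
          linarith
        rw [div_le_div_iff₀ (pow_pos hb 2) (pow_pos hnTp 2)]
        have hsq : p.1^2 ≤ (n * Tp)^2 := by nlinarith
        nlinarith [mul_le_mul_of_nonpos_left hsq hnum]
      have e3 : Cc / p.1 ≤ Cc / βlo := div_le_div_of_nonneg_left hCc hβlo hβ
      have e4 : -(n / (2 * p.1)) ≤ 0 := by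
        have : 0 ≤ n / (2 * p.1) := div_nonneg hn0.le (by linarith)
        linarith
      linarith
    have hfin : s₀ ≤ -(1/4) * ((d j : ℝ) * (1 - κ j) * p.2 j) / (n * Tp)^2 + Cc / βlo :=
      le_trans hsp h1
    rw [hαhidef]
    rw [le_div_iff₀ (ha' j)]
    have h2 : (1/4) * ((d j : ℝ) * (1 - κ j) * p.2 j) / (n * Tp)^2 ≤ Cc / βlo - s₀ := by
      have e : -(1/4) * ((d j : ℝ) * (1 - κ j) * p.2 j) / (n * Tp)^2
          = -((1/4) * ((d j : ℝ) * (1 - κ j) * p.2 j) / (n * Tp)^2) := by ring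
      rw [e] at hfin
      linarith
    rw [div_le_iff₀ (pow_pos hnTp 2)] at h2
    nlinarith [h2]
  -- lower bounds for the α's
  have lemLo : ∀ p ∈ Mneg, s₀ ≤ S p → ∀ j, (d j : ℝ) * T j * βlo / (n * Tp) ≤ p.2 j := by
    intro p hp hsp j
    have key := hkey p hp j
    have hβ := hβlo_le p hp hsp
    rw [div_le_iff₀ hnTp]
    nlinarith [mul_le_mul_of_nonneg_left hβ (mul_pos (hd' j) (hT j)).le]
  -- the compact box
  set lo : ℝ × (Fin m → ℝ) := (βlo, fun j => (d j : ℝ) * T j * βlo / (n * Tp)) with hlodef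
  set hi : ℝ × (Fin m → ℝ) := (n * Tp, αhi) with hhidef
  have hIccMem : ∀ p ∈ Mneg, s₀ ≤ S p → p ∈ Set.Icc lo hi := by
    intro p hp hsp
    refine ⟨⟨hβlo_le p hp hsp, fun j => lemLo p hp hsp j⟩,
      ⟨hble p hp, fun j => lemHi p hp hsp j⟩⟩
  have hIccPos : ∀ p ∈ Set.Icc lo hi, 0 < p.1 ∧ ∀ i, 0 < p.2 i := by
    intro p hp
    obtain ⟨⟨h1, h2⟩, _⟩ := hp
    refine ⟨lt_of_lt_of_le hβlo h1, fun i => lt_of_lt_of_le ?_ (h2 i)⟩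
    exact div_pos (mul_pos (mul_pos (hd' i) (hT i)) hβlo) hnTp
  -- continuity
  have hFfun : F = fun p : ℝ × (Fin m → ℝ) => -n * Tp / p.1 + ∑ i, (d i : ℝ) * T i / p.2 i :=
    funext hF
  have hSfun : S = fun p : ℝ × (Fin m → ℝ) => -(1/4) * (∑ i, (d i : ℝ) * (1 - κ i) * p.2 i) / p.1^2
      - n / (2 * p.1) + (1/4) * ∑ i, (d i : ℝ) * κ i / p.2 i := funext hS
  have hne1 : ∀ p ∈ Set.Icc lo hi, p.1 ≠ 0 := fun p hp => ne_of_gt (hIccPos p hp).1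
  have hne2 : ∀ p ∈ Set.Icc lo hi, ∀ i, p.2 i ≠ 0 := fun p hp i => ne_of_gt ((hIccPos p hp).2 i)
  have hc1 : ContinuousOn (fun p : ℝ × (Fin m → ℝ) => p.1) (Set.Icc lo hi) :=
    continuous_fst.continuousOn
  have hc2 : ∀ i, ContinuousOn (fun p : ℝ × (Fin m → ℝ) => p.2 i) (Set.Icc lo hi) :=
    fun i => ((continuous_apply i).comp continuous_snd).continuousOn
  have hFcont : ContinuousOn F (Set.Icc lo hi) := by
    rw [hFfun]
    apply ContinuousOn.add
    · exact continuousOn_const.div hc1 hne1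
    · exact continuousOn_finset_sum _ (fun i _ =>
        continuousOn_const.div (hc2 i) (fun p hp => hne2 p hp i))
  have hScont : ContinuousOn S (Set.Icc lo hi) := by
    rw [hSfun]
    apply ContinuousOn.add
    · apply ContinuousOn.sub
      · apply ContinuousOn.div
        · exact continuousOn_const.mul (continuousOn_finset_sum _ (fun i _ =>
            continuousOn_const.mul (hc2 i)))
        · exact hc1.pow 2
        · intro p hp
          exact pow_ne_zero 2 (hne1 p hp)
      · exact continuousOn_const.div (continuousOn_const.mul hc1)
          (fun p hp => mul_ne_zero two_ne_zero (hne1 p hp))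
    · exact continuousOn_const.mul (continuousOn_finset_sum _ (fun i _ =>
        continuousOn_const.div (hc2 i) (fun p hp => hne2 p hp i)))
  -- the compact set K
  set K : Set (ℝ × (Fin m → ℝ)) :=
    (Set.Icc lo hi ∩ F ⁻¹' {-1}) ∩ S ⁻¹' (Set.Ici s₀) with hKdef
  have hclosed : IsClosed K := by
    have h1 : IsClosed (Set.Icc lo hi ∩ F ⁻¹' {-1}) :=
      hFcont.preimage_isClosed_of_isClosed isClosed_Icc isClosed_singleton
    exact (hScont.mono (fun p hp => hp.1)).preimage_isClosed_of_isClosed h1 isClosed_Ici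
  have hKcomp : IsCompact K :=
    isCompact_Icc.of_isClosed_subset hclosed (fun p hp => hp.1.1)
  have hKsubM : K ⊆ Mneg := by
    intro p hp
    rw [hMneg]
    obtain ⟨⟨hpIcc, hpF⟩, _⟩ := hp
    obtain ⟨h1, h2⟩ := hIccPos p hpIcc
    exact ⟨h1, h2, hpF⟩
  have hMK : ∀ p ∈ Mneg, s₀ ≤ S p → p ∈ K := by
    intro p hp hsp
    obtain ⟨_, _, hFp⟩ := memMneg p hp
    exact ⟨⟨hIccMem p hp hsp, hFp⟩, hsp⟩
  have hp₀K : p₀ ∈ K := hMK p₀ hp₀ le_rfl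
  obtain ⟨pstar, hpsK, hmax⟩ :=
    hKcomp.exists_isMaxOn ⟨p₀, hp₀K⟩ (hScont.mono (fun p hp => hp.1.1))
  refine ⟨pstar, hKsubM hpsK, ?_⟩
  intro q hq
  by_cases hcase : s₀ ≤ S q
  · exact hmax (hMK q hq hcase)
  · have h1 : S q < s₀ := not_le.mp hcase
    have h2 : s₀ ≤ S pstar := hmax hp₀K
    linarith
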